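/- If g : ℝ^n → ℝ is given by a median with n+1 fixed phantom values, g(x) = median(x_1,...,x_n, α_1,...,α_{n+1}) with α_j ∈ ℝ̄, and g is translation equivariant (g(x+b·1) = g(x)+b for all b ∈ ℝ), then every α_j ∈ {-∞, +∞}. -/

import Mathlib

private lemma median_le_of_countP {L : List EReal} (hL : L.Pairwise (· ≤ ·)) {n : ℕ}
    (hn : n < L.length) {y : EReal}
    (hc : n + 1 ≤ L.countP (fun a => decide (a ≤ y))) : L.getD n ⊥ ≤ y := by
  rw [List.getD_eq_getElem _ _ hn]
  by_contra hlt
  push_neg at hlt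
  have hsplit : L.countP (fun a => decide (a ≤ y))
      = (L.take n).countP (fun a => decide (a ≤ y))
        + (L.drop n).countP (fun a => decide (a ≤ y)) := by
    conv_lhs => rw [← List.take_append_drop n L]
    rw [List.countP_append]
  have hdrop : (L.drop n).countP (fun a => decide (a ≤ y)) = 0 := by
    rw [List.countP_eq_zero]
    intro a ha
    obtain ⟨k, hk, rfl⟩ := List.mem_iff_getElem.mp ha
    rw [List.getElem_drop]
    have hnk : n + k < L.length := by
      have := (List.length_drop (i := n) (l := L)) ▸ hk; omega
    have h1 : L[n] ≤ L[n + k] := by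
      have := hL.rel_get_of_le (a := ⟨n, hn⟩) (b := ⟨n + k, hnk⟩) (by simp [Fin.le_def])
      simpa using this
    simp only [decide_eq_true_eq]
    exact fun h2 => absurd (h2.trans_lt hlt) (not_lt.mpr h1)
  have htake : (L.take n).countP (fun a => decide (a ≤ y)) ≤ n := by
    calc (L.take n).countP (fun a => decide (a ≤ y)) ≤ (L.take n).length :=
        List.countP_le_length
    _ ≤ n := by simp
  omega

private lemma le_median_of_countP {L : List EReal} (hL : L.Pairwise (· ≤ ·)) {n : ℕ}
    (hn : n < L.length) (hlen : L.length ≤ 2 * n + 1) {y : EReal}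
    (hc : n + 1 ≤ L.countP (fun a => decide (y ≤ a))) : y ≤ L.getD n ⊥ := by
  rw [List.getD_eq_getElem _ _ hn]
  by_contra hlt
  push_neg at hlt
  have hsplit : L.countP (fun a => decide (y ≤ a))
      = (L.take (n+1)).countP (fun a => decide (y ≤ a))
        + (L.drop (n+1)).countP (fun a => decide (y ≤ a)) := by
    conv_lhs => rw [← List.take_append_drop (n+1) L]
    rw [List.countP_append]
  have htake : (L.take (n+1)).countP (fun a => decide (y ≤ a)) = 0 := by
    rw [List.countP_eq_zero]
    intro a ha
    obtain ⟨k, hk, rfl⟩ := List.mem_iff_getElem.mp ha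
    rw [List.getElem_take]
    have hkn : k < n + 1 := by
      have := (List.length_take (i := n+1) (l := L)) ▸ hk; omega
    have hkL : k < L.length := by omega
    have h1 : L[k] ≤ L[n] := by
      have := hL.rel_get_of_le (a := ⟨k, hkL⟩) (b := ⟨n, hn⟩) (by simp [Fin.le_def]; omega)
      simpa using this
    simp only [decide_eq_true_eq]
    exact fun h2 => absurd (h2.trans_lt' hlt) (not_lt.mpr h1)
  have hdrop : (L.drop (n+1)).countP (fun a => decide (y ≤ a)) ≤ n := by
    calc (L.drop (n+1)).countP (fun a => decide (y ≤ a)) ≤ (L.drop (n+1)).length :=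
        List.countP_le_length
    _ ≤ n := by rw [List.length_drop]; omega
  omega

private lemma countP_le_add_ge (y : EReal) (l : List EReal) :
    l.length + l.countP (fun a => decide (a = y))
      ≤ l.countP (fun a => decide (a ≤ y)) + l.countP (fun a => decide (y ≤ a)) := by
  induction l with
  | nil => simp
  | cons x l ih =>
    simp only [List.countP_cons, List.length_cons]
    rcases le_total x y with h | h
    · by_cases hxy : x = y
      · subst hxy; simp; omega
      · simp [h, hxy]; omega
    · by_cases hxy : x = y
      · subst hxy; simp; omega
      · simp [h, hxy]
        by_cases h2 : x ≤ y <;> simp [h2] <;> omega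

private lemma ofFn_step (n h : ℕ) (hh : h ≤ n) (a b : EReal) :
    List.ofFn (fun i : Fin n => if i.val < h then a else b)
      = List.replicate h a ++ List.replicate (n - h) b := by
  apply List.ext_getElem
  · simp; omega
  · intro i h1 h2
    simp only [List.getElem_ofFn, List.getElem_append, List.length_replicate]
    by_cases hi : i < h <;> simp [hi, List.getElem_replicate]

/-- The median (the (n+1)-th smallest) of the 2n+1 extended reals consisting of the n
real arguments x and the n+1 fixed phantom values α. -/
noncomputable def phantomMedian (n : ℕ) (α : Fin (n + 1) → EReal) (x : Fin n → ℝ) : EReal :=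
  (List.insertionSort (· ≤ ·)
    (List.ofFn (fun i => ((x i : EReal))) ++ List.ofFn α)).getD n ⊥

private lemma median_eq_of_counts (n : ℕ) (l0 : List EReal) (r : EReal)
    (hlen : l0.length = 2 * n + 1)
    (k1 : n + 1 ≤ l0.countP (fun a => decide (a ≤ r)))
    (k2 : n + 1 ≤ l0.countP (fun a => decide (r ≤ a))) :
    (List.insertionSort (· ≤ ·) l0).getD n ⊥ = r := by
  have hperm : List.Perm (List.insertionSort (· ≤ ·) l0) l0 := List.perm_insertionSort _ _
  have hsorted : (List.insertionSort (· ≤ ·) l0).Pairwise (· ≤ ·) :=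
    List.pairwise_insertionSort _ _
  have hL : (List.insertionSort (· ≤ ·) l0).length = 2 * n + 1 := hperm.length_eq ▸ hlen
  have hn' : n < (List.insertionSort (· ≤ ·) l0).length := by omega
  have h1 := median_le_of_countP hsorted hn' (hperm.countP_eq _ ▸ k1)
  have h2 := le_median_of_countP hsorted hn' (by omega) (hperm.countP_eq _ ▸ k2)
  exact le_antisymm h1 h2

private lemma phantomMedian_step (n : ℕ) (α : Fin (n + 1) → EReal) (r lo hi : ℝ)
    (hlo : lo ≤ r) (hhi : r ≤ hi) {h : ℕ} (hh : h ≤ n)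
    (hA : n + 1 ≤ (n - h) + (List.ofFn α).countP (fun a => decide (a ≤ (r : EReal))))
    (hB : n + 1 ≤ h + (List.ofFn α).countP (fun a => decide ((r : EReal) ≤ a))) :
    phantomMedian n α (fun i => if i.val < h then hi else lo) = (r : EReal) := by
  have hxlist : List.ofFn (fun i : Fin n => (((if i.val < h then hi else lo) : ℝ) : EReal))
      = List.replicate h (hi : EReal) ++ List.replicate (n - h) (lo : EReal) := by
    rw [← ofFn_step n h hh]
    congr 1
    funext i
    split <;> rfl
  unfold phantomMedian
  apply median_eq_of_counts
  · rw [List.length_append, hxlist]; simp; omega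
  · rw [List.countP_append, hxlist, List.countP_append]
    have h1 : (List.replicate (n - h) (lo : EReal)).countP (fun a => decide (a ≤ (r : EReal)))
        = n - h := by
      rw [List.countP_replicate]
      simp [EReal.coe_le_coe_iff, hlo]
    omega
  · rw [List.countP_append, hxlist, List.countP_append]
    have h1 : (List.replicate h (hi : EReal)).countP (fun a => decide ((r : EReal) ≤ a))
        = h := by
      rw [List.countP_replicate]
      simp [EReal.coe_le_coe_iff, hhi]
    omega

/-- if g : ℝ^n → ℝ is a median with n+1 fixed phantom values and g is
translation equivariant, then every phantom is -∞ or +∞. -/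
theorem translation_equivariant_phantoms_infinite (n : ℕ) (g : (Fin n → ℝ) → ℝ)
    (α : Fin (n + 1) → EReal)
    (hg : ∀ x : Fin n → ℝ, (g x : EReal) = phantomMedian n α x)
    (heq : ∀ (x : Fin n → ℝ) (b : ℝ), g (fun i => x i + b) = g x + b) :
    ∀ j, α j = ⊥ ∨ α j = ⊤ := by
  intro j
  by_contra hj
  push_neg at hj
  obtain ⟨hjb, hjt⟩ := hj
  set r : ℝ := (α j).toReal with hr
  have hjr : α j = (r : EReal) := (EReal.coe_toReal hjt hjb).symm
  set P := List.ofFn α with hP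
  set A := P.countP (fun a => decide (a ≤ (r : EReal))) with hA
  set B := P.countP (fun a => decide ((r : EReal) ≤ a)) with hB
  have hPlen : P.length = n + 1 := by simp [hP]
  have hmem : (r : EReal) ∈ P := by
    rw [hP, List.mem_ofFn]
    exact ⟨j, hjr⟩
  have hEq1 : 1 ≤ P.countP (fun a => decide (a = (r : EReal))) := by
    rw [Nat.one_le_iff_ne_zero, Ne, List.countP_eq_zero]
    push_neg
    exact ⟨(r : EReal), hmem, by simp⟩
  have hABsum : n + 2 ≤ A + B := by
    have := countP_le_add_ge (r : EReal) P
    omega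
  have hAle : A ≤ n + 1 := hPlen ▸ List.countP_le_length
  have hBle : B ≤ n + 1 := hPlen ▸ List.countP_le_length
  have hB1 : 1 ≤ B := by
    rw [hB, Nat.one_le_iff_ne_zero, Ne, List.countP_eq_zero]
    push_neg
    exact ⟨(r : EReal), hmem, by simp⟩
  set h : ℕ := n + 1 - B with hh
  have hhn : h ≤ n := by omega
  have hA' : (List.ofFn α).countP (fun a => decide (a ≤ (r : EReal))) = A := rfl
  have hB' : (List.ofFn α).countP (fun a => decide ((r : EReal) ≤ a)) = B := rfl
  set x : Fin n → ℝ := fun i => if i.val < h then r + 10 else r - 10 with hx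
  have hgx : g x = r := by
    have := hg x
    rw [hx, phantomMedian_step n α r (r - 10) (r + 10) (by linarith) (by linarith) hhn
      (by omega) (by omega)] at this
    exact_mod_cast this
  have hgx1 : g (fun i => x i + 1) = r := by
    have hfun : (fun i => x i + 1) = fun i : Fin n => if i.val < h then r + 11 else r - 9 := by
      funext i
      by_cases hi : i.val < h <;> simp [hx, hi] <;> ring
    rw [hfun]
    have := hg (fun i : Fin n => if i.val < h then r + 11 else r - 9)
    rw [phantomMedian_step n α r (r - 9) (r + 11) (by linarith) (by linarith) hhn
      (by omega) (by omega)] at this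
    exact_mod_cast this
  have := heq x 1
  rw [hgx, hgx1] at this
  linarith
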